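/- Let Γ be a connected graph with diameter D = 2, Laplacian matrix L, and Laplacian predistance polynomials r_i. If equality holds in the Laplacian harmonic-mean bound, i.e., A_2 = ∑_{i=2}^d r_i(L) (equivalently s_1(L) = J - A_2 = I + A), then Γ is regular. -/
import Mathlib


open Polynomial Matrix Finset
open scoped Classical

/-- Inner product on polynomials induced by a symmetric matrix `M`:
`⟨f,g⟩ = (1/n) tr(f(M) g(M))`. -/
noncomputable def minner {V : Type*} [Fintype V] [DecidableEq V] (M : Matrix V V ℝ)
    (f g : Polynomial ℝ) : ℝ :=
  (Matrix.trace (aeval M f * aeval M g)) / (Fintype.card V : ℝ)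

/-- Number of vertices at distance exactly `i` from `x`. -/
noncomputable def nDist {V : Type*} (G : SimpleGraph V) (x : V) (i : ℕ) : ℕ :=
  Nat.card {y : V | G.dist x y = i}

/-- The distance-`i` (0,1)-matrix of a graph. -/
noncomputable def distMatrix {V : Type*} (G : SimpleGraph V) (i : ℕ) : Matrix V V ℝ :=
  Matrix.of fun x y => if G.dist x y = i ∧ x ≠ y then (1 : ℝ) else 0

/-- `G` has diameter `D`. -/
def HasDiameter {V : Type*} (G : SimpleGraph V) (D : ℕ) : Prop :=
  (∀ x y : V, G.dist x y ≤ D) ∧ ∃ x y : V, G.dist x y = D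

/-- `p 0, …, p d` is the system of (pre)distance polynomials of the matrix `M` whose
largest eigenvalue is `lam0`: `p i` has degree `i`, they are mutually orthogonal with
respect to `minner M`, and they are normalized by `‖p i‖² = p i (lam0)`. -/
def IsPredistanceSystem {V : Type*} [Fintype V] [DecidableEq V] (M : Matrix V V ℝ) (lam0 : ℝ) (d : ℕ)
    (p : ℕ → Polynomial ℝ) : Prop :=
  (∀ i ≤ d, (p i).natDegree = i) ∧
  (∀ i ≤ d, ∀ j ≤ d, i ≠ j → minner M (p i) (p j) = 0) ∧
  (∀ i ≤ d, minner M (p i) (p i) = (p i).eval lam0)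

/-- A (connected) graph is distance-regular if the intersection numbers
`b_i = |Γ(y) ∩ Γ_{i+1}(x)|` and `c_i = |Γ(y) ∩ Γ_{i-1}(x)|` depend only on `i = dist x y`. -/
def IsDistanceRegular {V : Type*} (G : SimpleGraph V) : Prop :=
  G.Connected ∧ ∀ i : ℕ, ∃ b c : ℕ, ∀ x y : V, G.dist x y = i →
    Nat.card {z : V | G.Adj y z ∧ G.dist x z = i + 1} = b ∧
    Nat.card {z : V | G.Adj y z ∧ G.dist x z = i - 1} = c

/-- Average degree of a graph. -/
noncomputable def avgDeg {V : Type*} [Fintype V] [DecidableEq V] (G : SimpleGraph V)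
    [DecidableRel G.Adj] : ℝ :=
  (∑ x : V, (G.degree x : ℝ)) / (Fintype.card V : ℝ)

/-- Average of the squared degrees of a graph. -/
noncomputable def avgSqDeg {V : Type*} [Fintype V] [DecidableEq V] (G : SimpleGraph V)
    [DecidableRel G.Adj] : ℝ :=
  (∑ x : V, (G.degree x : ℝ) ^ 2) / (Fintype.card V : ℝ)

/-- The first Laplacian predistance polynomial
`r₁(x) = (k̄/(k̄(k̄-1) - k̄²)) (x - k̄)`. -/
noncomputable def r1 {V : Type*} [Fintype V] [DecidableEq V] (G : SimpleGraph V)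
    [DecidableRel G.Adj] : Polynomial ℝ :=
  Polynomial.C (avgDeg G / (avgDeg G * (avgDeg G - 1) - avgSqDeg G)) *
    (Polynomial.X - Polynomial.C (avgDeg G))


lemma pow_mulVec_ones {V : Type*} [Fintype V] [DecidableEq V] (G : SimpleGraph V)
    [DecidableRel G.Adj] (n : ℕ) :
    (G.lapMatrix ℝ ^ n) *ᵥ (fun _ => (1 : ℝ)) = if n = 0 then (fun _ => (1:ℝ)) else (0 : V → ℝ) := by
  induction n with
  | zero => simp
  | succ n ih =>
    rw [pow_succ, ← mulVec_mulVec, SimpleGraph.lapMatrix_mulVec_const_eq_zero]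
    simp

lemma aeval_mulVec_ones {V : Type*} [Fintype V] [DecidableEq V] (G : SimpleGraph V)
    [DecidableRel G.Adj] (p : Polynomial ℝ) :
    (aeval (G.lapMatrix ℝ) p) *ᵥ (fun _ => (1 : ℝ)) = fun _ => p.eval 0 := by
  induction p using Polynomial.induction_on' with
  | add p q hp hq =>
    rw [map_add, add_mulVec, hp, hq]
    funext x
    simp
  | monomial n a =>
    rw [aeval_monomial, Algebra.algebraMap_eq_smul_one, smul_mul_assoc, one_mul,
      smul_mulVec, pow_mulVec_ones]
    funext x
    by_cases hn : n = 0 <;> simp [hn, zero_pow, hn]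

lemma rowsum_aeval {V : Type*} [Fintype V] [DecidableEq V] (G : SimpleGraph V)
    [DecidableRel G.Adj] (p : Polynomial ℝ) (x : V) :
    ∑ y, (aeval (G.lapMatrix ℝ) p) x y = p.eval 0 := by
  have h := congrFun (aeval_mulVec_ones G p) x
  simpa [mulVec, dotProduct] using h

lemma rowsum_distMatrix {V : Type*} [Fintype V] [DecidableEq V] (G : SimpleGraph V)
    [DecidableRel G.Adj] (hconn : G.Connected) (hD : ∀ x y : V, G.dist x y ≤ 2) (x : V) :
    ∑ y, distMatrix G 2 x y = (Fintype.card V : ℝ) - 1 - G.degree x := by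
  have key : ∀ y : V, distMatrix G 2 x y
      = 1 - (if x = y then (1:ℝ) else 0) - (if G.Adj x y then (1:ℝ) else 0) := by
    intro y
    simp only [distMatrix, Matrix.of_apply]
    by_cases hxy : x = y
    · subst hxy
      simp [G.irrefl]
    · by_cases hadj : G.Adj x y
      · have h1 : G.dist x y = 1 := (SimpleGraph.dist_eq_one_iff_adj).mpr hadj
        simp [hxy, hadj, h1]
      · have h0 : G.dist x y ≠ 0 := fun h => hxy (hconn.dist_eq_zero_iff.mp h)
        have h1 : G.dist x y ≠ 1 := fun h => hadj ((SimpleGraph.dist_eq_one_iff_adj).mp h)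
        have hle := hD x y
        have h2 : G.dist x y = 2 := by omega
        simp [hxy, hadj, h2]
  rw [Finset.sum_congr rfl (fun y _ => key y)]
  rw [Finset.sum_sub_distrib, Finset.sum_sub_distrib]
  have hdeg : ∑ y : V, (if G.Adj x y then (1:ℝ) else 0) = G.degree x := by
    rw [Finset.sum_boole]
    congr 1
    rw [SimpleGraph.degree, SimpleGraph.neighborFinset]
    congr 1
    ext y
    simp [SimpleGraph.mem_neighborSet]
  rw [hdeg, Finset.sum_ite_eq]
  simp

/-- If a connected graph of diameter `2` attains equality in the Laplacian
harmonic-mean bound, i.e. `A₂ = ∑_{i=2}^d rᵢ(L)`, then it is regular. -/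
theorem lap_diam_two_regular {V : Type*} [Fintype V] [DecidableEq V]
    (G : SimpleGraph V) [DecidableRel G.Adj] (hconn : G.Connected)
    (d : ℕ) (hd : Nat.card (spectrum ℝ (G.lapMatrix ℝ)) = d + 1)
    (hD : HasDiameter G 2)
    (r : ℕ → Polynomial ℝ) (hr : IsPredistanceSystem (G.lapMatrix ℝ) (0 : ℝ) d r)
    (heq : distMatrix G 2 = ∑ i ∈ Finset.Icc 2 d, aeval (G.lapMatrix ℝ) (r i)) :
    ∃ k : ℕ, G.IsRegularOfDegree k := by
  obtain ⟨x0⟩ := hconn.nonempty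
  have hrow : ∀ x : V, (Fintype.card V : ℝ) - 1 - G.degree x
      = ∑ i ∈ Finset.Icc 2 d, (r i).eval 0 := by
    intro x
    rw [← rowsum_distMatrix G hconn hD.1 x, heq]
    simp only [Matrix.sum_apply]
    rw [Finset.sum_comm]
    exact Finset.sum_congr rfl fun i _ => rowsum_aeval G (r i) x
  refine ⟨G.degree x0, fun v => ?_⟩
  have h1 := hrow v
  have h2 := hrow x0
  have h3 : (G.degree v : ℝ) = G.degree x0 := by linarith
  exact_mod_cast h3
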